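/- Let a > 0 and λ ≥ 0, and define f : [0,∞) → ℝ by f(r) = (1/2)·∫₀^r exp((a s⁴ − 2λ s²)/8)·(∫_s^∞ exp(−(a σ⁴ − 2λ σ²)/8) dσ) ds. Then f is twice continuously differentiable on [0,∞), f(0) = 0, its derivative is f'(r) = (1/2)·exp((a r⁴ − 2λ r²)/8)·∫_r^∞ exp(−(a σ⁴ − 2λ σ²)/8) dσ, and f satisfies the ordinary differential equation 2 f''(r) + f'(r)·(λ r − a r³) = −1 for all r ≥ 0. -/

import Mathlib

open MeasureTheory

open MeasureTheory

lemma aux_integrable (a lam : ℝ) (ha : 0 < a) :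
    Integrable (fun σ : ℝ => Real.exp (-((a * σ ^ 4 - 2 * lam * σ ^ 2) / 8))) := by
  have hc : Continuous (fun σ : ℝ => Real.exp (-((a * σ ^ 4 - 2 * lam * σ ^ 2) / 8))) := by
    fun_prop
  refine (((integrable_exp_neg_mul_sq one_pos).const_mul
    (Real.exp ((lam + 4) ^ 2 / (8 * a)))).mono' hc.aestronglyMeasurable ?_)
  filter_upwards with σ
  rw [Real.norm_eq_abs, abs_of_pos (Real.exp_pos _), ← Real.exp_add]
  apply Real.exp_le_exp.2
  rw [← sub_nonneg]
  have h : (lam + 4) ^ 2 / (8 * a) + -1 * σ ^ 2 - -((a * σ ^ 4 - 2 * lam * σ ^ 2) / 8)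
      = (a * σ ^ 2 - (lam + 4)) ^ 2 / (8 * a) := by
    field_simp
    ring
  rw [h]
  positivity

lemma aux_G_deriv (a lam : ℝ) (ha : 0 < a) (s : ℝ) :
    HasDerivAt (fun u : ℝ => ∫ σ in Set.Ioi u, Real.exp (-((a * σ ^ 4 - 2 * lam * σ ^ 2) / 8)))
      (-(Real.exp (-((a * s ^ 4 - 2 * lam * s ^ 2) / 8)))) s := by
  set φ : ℝ → ℝ := fun σ => Real.exp (-((a * σ ^ 4 - 2 * lam * σ ^ 2) / 8)) with hφdef
  have hφc : Continuous φ := by fun_prop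
  have hφint : Integrable φ := aux_integrable a lam ha
  have hG : ∀ u : ℝ, (∫ σ in Set.Ioi u, φ σ)
      = (∫ σ, φ σ) - ((∫ σ in Set.Iic (0:ℝ), φ σ) + ∫ σ in (0:ℝ)..u, φ σ) := by
    intro u
    have h1 := intervalIntegral.integral_Iic_sub_Iic (a := (0:ℝ)) (b := u) (μ := volume)
      hφint.integrableOn hφint.integrableOn
    have h2 := intervalIntegral.integral_Iic_add_Ioi (b := u) (μ := volume)
      hφint.integrableOn hφint.integrableOn
    linarith
  have hFTC : HasDerivAt (fun u : ℝ => ∫ x in (0:ℝ)..u, φ x) (φ s) s :=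
    intervalIntegral.integral_hasDerivAt_right (hφint.intervalIntegrable)
      hφc.stronglyMeasurable.stronglyMeasurableAtFilter hφc.continuousAt
  have h := ((hFTC.const_add (∫ σ in Set.Iic (0:ℝ), φ σ)).const_sub (∫ σ, φ σ))
  have heq : (fun u : ℝ => ∫ σ in Set.Ioi u, φ σ)
      = fun u => (∫ σ, φ σ) - ((∫ σ in Set.Iic (0:ℝ), φ σ) + ∫ σ in (0:ℝ)..u, φ σ) :=
    funext hG
  rw [heq]
  exact h

lemma aux_g_deriv (a lam : ℝ) (r : ℝ) :
    HasDerivAt (fun s : ℝ => Real.exp ((a * s ^ 4 - 2 * lam * s ^ 2) / 8))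
      (Real.exp ((a * r ^ 4 - 2 * lam * r ^ 2) / 8) * ((a * r ^ 3 - lam * r) / 2)) r := by
  have hp : HasDerivAt (fun s : ℝ => (a * s ^ 4 - 2 * lam * s ^ 2) / 8)
      ((a * r ^ 3 - lam * r) / 2) r := by
    have h := (((hasDerivAt_pow 4 r).const_mul a).sub
      ((hasDerivAt_pow 2 r).const_mul (2 * lam))).div_const 8
    refine h.congr_deriv ?_
    norm_num
    ring
  exact hp.exp

theorem stmt1 (a lam : ℝ) (ha : 0 < a) (hlam : 0 ≤ lam) (f : ℝ → ℝ)
    (hf : ∀ r : ℝ, f r = (1 / 2) * ∫ s in (0:ℝ)..r,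
      Real.exp ((a * s ^ 4 - 2 * lam * s ^ 2) / 8) *
        ∫ σ in Set.Ioi s, Real.exp (-((a * σ ^ 4 - 2 * lam * σ ^ 2) / 8))) :
    ContDiffOn ℝ 2 f (Set.Ici 0) ∧ f 0 = 0 ∧
    (∀ r : ℝ, 0 ≤ r → deriv f r = (1 / 2) * Real.exp ((a * r ^ 4 - 2 * lam * r ^ 2) / 8) *
      ∫ σ in Set.Ioi r, Real.exp (-((a * σ ^ 4 - 2 * lam * σ ^ 2) / 8))) ∧
    (∀ r : ℝ, 0 ≤ r →
      2 * deriv (deriv f) r + deriv f r * (lam * r - a * r ^ 3) = -1) := by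
  have hfF : f = fun r => (1 / 2) * ∫ s in (0:ℝ)..r,
      Real.exp ((a * s ^ 4 - 2 * lam * s ^ 2) / 8) *
        ∫ σ in Set.Ioi s, Real.exp (-((a * σ ^ 4 - 2 * lam * σ ^ 2) / 8)) := funext hf
  have hGd : ∀ s : ℝ, HasDerivAt
      (fun u : ℝ => ∫ σ in Set.Ioi u, Real.exp (-((a * σ ^ 4 - 2 * lam * σ ^ 2) / 8)))
      (-(Real.exp (-((a * s ^ 4 - 2 * lam * s ^ 2) / 8)))) s := aux_G_deriv a lam ha
  have hGc : Continuous
      (fun u : ℝ => ∫ σ in Set.Ioi u, Real.exp (-((a * σ ^ 4 - 2 * lam * σ ^ 2) / 8))) :=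
    continuous_iff_continuousAt.2 fun s => (hGd s).continuousAt
  have hgc : Continuous (fun s : ℝ => Real.exp ((a * s ^ 4 - 2 * lam * s ^ 2) / 8)) := by
    fun_prop
  have hhc : Continuous (fun s : ℝ => Real.exp ((a * s ^ 4 - 2 * lam * s ^ 2) / 8) *
      ∫ σ in Set.Ioi s, Real.exp (-((a * σ ^ 4 - 2 * lam * σ ^ 2) / 8))) := hgc.mul hGc
  have hFd : ∀ r : ℝ, HasDerivAt f ((1 / 2) * (Real.exp ((a * r ^ 4 - 2 * lam * r ^ 2) / 8) *
      ∫ σ in Set.Ioi r, Real.exp (-((a * σ ^ 4 - 2 * lam * σ ^ 2) / 8)))) r := by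
    intro r
    rw [hfF]
    exact (intervalIntegral.integral_hasDerivAt_right (hhc.intervalIntegrable _ _)
      hhc.stronglyMeasurable.stronglyMeasurableAtFilter hhc.continuousAt).const_mul (1 / 2)
  have hderiv : ∀ r : ℝ, deriv f r = (1 / 2) * (Real.exp ((a * r ^ 4 - 2 * lam * r ^ 2) / 8) *
      ∫ σ in Set.Ioi r, Real.exp (-((a * σ ^ 4 - 2 * lam * σ ^ 2) / 8))) :=
    fun r => (hFd r).deriv
  have hdF : deriv f = fun r => (1 / 2) * (Real.exp ((a * r ^ 4 - 2 * lam * r ^ 2) / 8) *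
      ∫ σ in Set.Ioi r, Real.exp (-((a * σ ^ 4 - 2 * lam * σ ^ 2) / 8))) := funext hderiv
  have hF2 : ∀ r : ℝ, HasDerivAt (deriv f)
      ((1 / 2) * ((Real.exp ((a * r ^ 4 - 2 * lam * r ^ 2) / 8) * ((a * r ^ 3 - lam * r) / 2)) *
        (∫ σ in Set.Ioi r, Real.exp (-((a * σ ^ 4 - 2 * lam * σ ^ 2) / 8))) +
        Real.exp ((a * r ^ 4 - 2 * lam * r ^ 2) / 8) *
          -(Real.exp (-((a * r ^ 4 - 2 * lam * r ^ 2) / 8))))) r := by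
    intro r
    rw [hdF]
    exact ((aux_g_deriv a lam r).mul (hGd r)).const_mul (1 / 2)
  refine ⟨?_, ?_, fun r _ => by rw [hderiv r]; ring, ?_⟩
  · apply ContDiff.contDiffOn
    show ContDiff ℝ (1 + 1) f
    rw [contDiff_succ_iff_deriv]
    refine ⟨fun r => (hFd r).differentiableAt, by simp, ?_⟩
    rw [hdF]
    have hg1 : ContDiff ℝ 1 (fun s : ℝ => Real.exp ((a * s ^ 4 - 2 * lam * s ^ 2) / 8)) := by
      apply Real.contDiff_exp.comp
      exact ContDiff.div_const (by fun_prop) 8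
    have hG1 : ContDiff ℝ 1
        (fun u : ℝ => ∫ σ in Set.Ioi u, Real.exp (-((a * σ ^ 4 - 2 * lam * σ ^ 2) / 8))) := by
      rw [contDiff_one_iff_deriv]
      refine ⟨fun s => (hGd s).differentiableAt, ?_⟩
      have : deriv (fun u : ℝ => ∫ σ in Set.Ioi u,
          Real.exp (-((a * σ ^ 4 - 2 * lam * σ ^ 2) / 8)))
          = fun s => -(Real.exp (-((a * s ^ 4 - 2 * lam * s ^ 2) / 8))) :=
        funext fun s => (hGd s).deriv
      rw [this]
      fun_prop
    exact contDiff_const.mul (hg1.mul hG1)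
  · rw [hf 0]
    simp
  · intro r _
    have h2 := (hF2 r).deriv
    rw [h2, hderiv r]
    have hgφ : Real.exp ((a * r ^ 4 - 2 * lam * r ^ 2) / 8) *
        Real.exp (-((a * r ^ 4 - 2 * lam * r ^ 2) / 8)) = 1 := by
      rw [← Real.exp_add]; simp
    linear_combination -hgφ
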